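/- Gradient flow convergence rate with Łojasiewicz exponent one half: Let H be a Hilbert space, E a C¹ function on an open set U of a Banach space X continuously embedded in H, with gradient map E' : U → H, and suppose ‖E'(x)‖_H ≥ c |E(x) − E(x_∞)|^{1/2} for all x in a ball U_σ around a critical point x_∞, where c > 0. If u : [0,∞) → X is a smooth solution of u̇(t) = −E'(u(t)) whose orbit stays in U_σ, and a ≤ E ≤ γ on U, then there exists u_∞ ∈ H with ‖u(t) − u_∞‖_H ≤ (2/c)√(γ − a) · exp(−c² t/2) for all t ≥ 0. -/

import Mathlib

open scoped RealInnerProductSpace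
open Set Filter

lemma my_sqrt_add_le (x y : ℝ) (hx : 0 ≤ x) (hy : 0 ≤ y) :
    Real.sqrt (x + y) ≤ Real.sqrt x + Real.sqrt y := by
  have h : x + y ≤ (Real.sqrt x + Real.sqrt y) ^ 2 := by
    nlinarith [Real.sq_sqrt hx, Real.sq_sqrt hy, Real.sqrt_nonneg x, Real.sqrt_nonneg y]
  calc Real.sqrt (x + y) ≤ Real.sqrt ((Real.sqrt x + Real.sqrt y) ^ 2) := Real.sqrt_le_sqrt h
    _ = Real.sqrt x + Real.sqrt y := Real.sqrt_sq (by positivity)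

lemma my_key_estimate {H : Type*} [NormedAddCommGroup H] [NormedSpace ℝ H]
    (c ε : ℝ) (hc : 0 < c) (hε : 0 < ε)
    (g : ℝ → ℝ) (f : ℝ → H) (v : ℝ → H) (s t : ℝ) (hst : s ≤ t)
    (hg' : ∀ τ, s ≤ τ → HasDerivAt g (-(‖v τ‖^2)) τ)
    (hf' : ∀ τ, s ≤ τ → HasDerivAt f (-(v τ)) τ)
    (hgnn : ∀ τ, s ≤ τ → 0 ≤ g τ)
    (hsqd : ∀ τ, s ≤ τ → Real.sqrt (g τ) ≤ Real.sqrt (g s) * Real.exp (-(c^2) * (τ - s) / 2)) :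
    ‖f t - f s‖ ≤ (1/c) * (Real.sqrt (g s + ε) - Real.sqrt (g t + ε))
      + (1/c) * Real.sqrt (g s) * (1 - Real.exp (-(c^2) * (t - s) / 2))
      + (c/2) * Real.sqrt ε * (t - s) := by
  have hmain := image_norm_le_of_norm_deriv_right_le_deriv_boundary'
    (f := fun τ => f τ - f s) (a := s) (b := t) (f' := fun τ => -(v τ))
    (B := fun τ => (1/c) * (Real.sqrt (g s + ε) - Real.sqrt (g τ + ε))
      + (1/c) * Real.sqrt (g s) * (1 - Real.exp (-(c^2) * (τ - s) / 2))
      + (c/2) * Real.sqrt ε * (τ - s))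
    (B' := fun τ => ‖v τ‖^2 / (2 * c * Real.sqrt (g τ + ε))
      + (c/2) * (Real.sqrt (g s) * Real.exp (-(c^2) * (τ - s) / 2) + Real.sqrt ε))
    ?_ ?_ ?_ ?_ ?_ ?_
  · exact hmain (right_mem_Icc.mpr hst)
  · -- continuity of f
    intro τ hτ
    exact (((hf' τ hτ.1).continuousAt.sub continuousAt_const).continuousWithinAt)
  · -- right derivative of f
    intro τ hτ
    exact ((hf' τ hτ.1).sub_const _).hasDerivWithinAt
  · -- value at s
    simp
  · -- continuity of B
    intro τ hτ
    have hpos : 0 < g τ + ε := by linarith [hgnn τ hτ.1]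
    apply ContinuousWithinAt.add
    apply ContinuousWithinAt.add
    · apply ContinuousWithinAt.mul continuousWithinAt_const
      apply ContinuousWithinAt.sub continuousWithinAt_const
      exact (((hg' τ hτ.1).continuousAt.add continuousAt_const).sqrt).continuousWithinAt
    · apply ContinuousWithinAt.mul continuousWithinAt_const
      apply ContinuousWithinAt.sub continuousWithinAt_const
      exact (Continuous.continuousWithinAt (by fun_prop))
    · exact (Continuous.continuousWithinAt (by fun_prop))
  · -- derivative of B
    intro τ hτ
    have hpos : 0 < g τ + ε := by linarith [hgnn τ hτ.1]
    have hsp : 0 < Real.sqrt (g τ + ε) := Real.sqrt_pos.mpr hpos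
    have hsqrt : HasDerivAt (fun τ => Real.sqrt (g τ + ε))
        ((1 / (2 * Real.sqrt (g τ + ε))) * (-(‖v τ‖^2))) τ :=
      (Real.hasDerivAt_sqrt hpos.ne').comp τ ((hg' τ hτ.1).add_const ε)
    have hexp : HasDerivAt (fun τ : ℝ => Real.exp (-(c^2) * (τ - s) / 2))
        (Real.exp (-(c^2) * (τ - s) / 2) * (-(c^2) / 2)) τ := by
      have hin : HasDerivAt (fun τ : ℝ => -(c^2) * (τ - s) / 2) (-(c^2)/2) τ := by
        simpa using (((hasDerivAt_id τ).sub_const s).const_mul (-(c^2))).div_const 2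
      exact hin.exp
    have h1 : HasDerivAt (fun τ => (1/c) * (Real.sqrt (g s + ε) - Real.sqrt (g τ + ε)))
        ((1/c) * (0 - (1 / (2 * Real.sqrt (g τ + ε))) * (-(‖v τ‖^2)))) τ :=
      ((hasDerivAt_const τ (Real.sqrt (g s + ε))).sub hsqrt).const_mul (1/c)
    have h2 : HasDerivAt (fun τ => (1/c) * Real.sqrt (g s) *
        (1 - Real.exp (-(c^2) * (τ - s) / 2)))
        ((1/c) * Real.sqrt (g s) *
          (0 - Real.exp (-(c^2) * (τ - s) / 2) * (-(c^2) / 2))) τ :=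
      ((hasDerivAt_const τ (1:ℝ)).sub hexp).const_mul _
    have h3 : HasDerivAt (fun τ : ℝ => (c/2) * Real.sqrt ε * (τ - s))
        ((c/2) * Real.sqrt ε) τ := by
      simpa using ((hasDerivAt_id τ).sub_const s).const_mul ((c/2) * Real.sqrt ε)
    have hsum := (h1.add h2).add h3
    have heq : (1/c) * (0 - (1 / (2 * Real.sqrt (g τ + ε))) * (-(‖v τ‖^2)))
        + (1/c) * Real.sqrt (g s) * (0 - Real.exp (-(c^2) * (τ - s) / 2) * (-(c^2) / 2))
        + (c/2) * Real.sqrt ε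
        = ‖v τ‖^2 / (2 * c * Real.sqrt (g τ + ε))
          + (c/2) * (Real.sqrt (g s) * Real.exp (-(c^2) * (τ - s) / 2) + Real.sqrt ε) := by
      field_simp
      ring
    rw [heq] at hsum
    exact hsum.hasDerivWithinAt
  · -- bound
    intro τ hτ
    rw [norm_neg]
    have hτ1 := hτ.1
    have hpos : 0 < g τ + ε := by linarith [hgnn τ hτ1]
    have hppos : 0 < Real.sqrt (g τ + ε) := Real.sqrt_pos.mpr hpos
    set x : ℝ := ‖v τ‖ with hxdef
    set p : ℝ := Real.sqrt (g τ + ε) with hpdef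
    have hxnn : 0 ≤ x := norm_nonneg _
    have hstep1 : x ≤ x^2 / (2*c*p) + c/2 * p := by
      have h2cp : 0 < 2*c*p := by positivity
      have hh : x * (2*c*p) ≤ x^2 + c^2*p^2 := by nlinarith [sq_nonneg (x - c*p)]
      calc x = x * (2*c*p) / (2*c*p) := by field_simp
        _ ≤ (x^2 + c^2*p^2) / (2*c*p) := by gcongr
        _ = x^2/(2*c*p) + c/2 * p := by
            field_simp
    have hstep2 : p ≤ Real.sqrt (g s) * Real.exp (-(c^2) * (τ - s) / 2) + Real.sqrt ε := by
      calc p ≤ Real.sqrt (g τ) + Real.sqrt ε :=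
          my_sqrt_add_le _ _ (hgnn τ hτ1) hε.le
        _ ≤ Real.sqrt (g s) * Real.exp (-(c^2) * (τ - s) / 2) + Real.sqrt ε := by
            linarith [hsqd τ hτ1]
    calc x ≤ x^2 / (2*c*p) + c/2 * p := hstep1
      _ ≤ x^2 / (2*c*p) + c/2 * (Real.sqrt (g s) * Real.exp (-(c^2) * (τ - s) / 2)
          + Real.sqrt ε) := by
          have := mul_le_mul_of_nonneg_left hstep2 (by positivity : (0:ℝ) ≤ c/2)
          linarith
      _ = _ := rfl
lemma my_antitoneOn_Ici {f f' : ℝ → ℝ} {a : ℝ}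
    (hf : ∀ t ∈ Set.Ici a, HasDerivAt f (f' t) t)
    (h0 : ∀ t ∈ Set.Ici a, f' t ≤ 0) : AntitoneOn f (Set.Ici a) := by
  apply antitoneOn_of_deriv_nonpos (convex_Ici a)
  · exact fun t ht => (hf t ht).continuousAt.continuousWithinAt
  · rw [interior_Ici]
    exact fun t ht => (hf t (Set.mem_Ici.mpr (le_of_lt ht))).differentiableAt.differentiableWithinAt
  · rw [interior_Ici]
    intro t ht
    rw [(hf t (Set.mem_Ici.mpr (le_of_lt ht))).deriv]
    exact h0 t (Set.mem_Ici.mpr (le_of_lt ht))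

lemma my_monotoneOn_Ici {f f' : ℝ → ℝ} {a : ℝ}
    (hf : ∀ t ∈ Set.Ici a, HasDerivAt f (f' t) t)
    (h0 : ∀ t ∈ Set.Ici a, 0 ≤ f' t) : MonotoneOn f (Set.Ici a) := by
  apply monotoneOn_of_deriv_nonneg (convex_Ici a)
  · exact fun t ht => (hf t ht).continuousAt.continuousWithinAt
  · rw [interior_Ici]
    exact fun t ht => (hf t (Set.mem_Ici.mpr (le_of_lt ht))).differentiableAt.differentiableWithinAt
  · rw [interior_Ici]
    intro t ht
    rw [(hf t (Set.mem_Ici.mpr (le_of_lt ht))).deriv]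
    exact h0 t (Set.mem_Ici.mpr (le_of_lt ht))
set_option maxHeartbeats 1000000 in
theorem gradient_flow_exponential_convergence {X H : Type*}
    [NormedAddCommGroup X] [NormedSpace ℝ X] [CompleteSpace X]
    [NormedAddCommGroup H] [InnerProductSpace ℝ H] [CompleteSpace H]
    (j : X →L[ℝ] H) (hj : Function.Injective j) (hdense : DenseRange j)
    (U : Set X) (hU : IsOpen U)
    (E : X → ℝ) (G : X → X)
    (hE : ∀ x ∈ U, HasFDerivAt E ((innerSL ℝ (j (G x))).comp j) x)
    (xinf : X) (hxinfU : xinf ∈ U) (hcrit : G xinf = 0)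
    (σ c a γ : ℝ) (hσ : 0 < σ) (hσ1 : σ ≤ 1) (hc : 0 < c) (haγ : a < γ)
    (hUσ : {x : X | ‖x - xinf‖ < σ} ⊆ U)
    (hbound : ∀ x ∈ U, a ≤ E x ∧ E x ≤ γ)
    (hloj : ∀ x : X, ‖x - xinf‖ < σ → c * |E x - E xinf| ^ ((1 : ℝ) / 2) ≤ ‖j (G x)‖)
    (u : ℝ → X)
    (hu : ∀ t : ℝ, 0 ≤ t → HasDerivAt u (-(G (u t))) t)
    (horbit : ∀ t : ℝ, 0 ≤ t → ‖u t - xinf‖ < σ) :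
    ∃ uinf : H, ∀ t : ℝ, 0 ≤ t →
      ‖j (u t) - uinf‖ ≤ (2 / c) * Real.sqrt (γ - a) * Real.exp (-(c ^ 2) * t / 2) := by
  classical
  set g : ℝ → ℝ := fun t => E (u t) - E xinf with hgdef
  set v : ℝ → H := fun t => j (G (u t)) with hvdef
  have hmem : ∀ t : ℝ, 0 ≤ t → u t ∈ U := fun t ht => hUσ (horbit t ht)
  -- derivative of g
  have hg' : ∀ t ∈ Ici (0:ℝ), HasDerivAt g (-(‖v t‖^2)) t := by
    intro t ht
    have h1 := (hE (u t) (hmem t ht)).comp_hasDerivAt t (hu t ht)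
    have h2 : ((innerSL ℝ (j (G (u t)))).comp j) (-(G (u t))) = -(‖j (G (u t))‖^2) := by
      simp [real_inner_self_eq_norm_sq]
    rw [h2] at h1
    exact h1.sub_const _
  -- derivative of j ∘ u
  have hf' : ∀ t ∈ Ici (0:ℝ), HasDerivAt (fun t => j (u t)) (-(v t)) t := by
    intro t ht
    have := j.hasFDerivAt.comp_hasDerivAt t (hu t ht)
    simpa [Function.comp_def] using this
  -- Lojasiewicz squared
  have hvsq : ∀ t ∈ Ici (0:ℝ), c^2 * |g t| ≤ ‖v t‖^2 := by
    intro t ht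
    have hA := hloj (u t) (horbit t ht)
    have hAsq : (|E (u t) - E xinf| ^ ((1:ℝ)/2))^2 = |g t| := by
      rw [← Real.rpow_natCast (|E (u t) - E xinf| ^ ((1:ℝ)/2)) 2,
        ← Real.rpow_mul (abs_nonneg _)]
      norm_num
      rfl
    have h2 : (c * |E (u t) - E xinf| ^ ((1:ℝ)/2))^2 ≤ ‖v t‖^2 :=
      pow_le_pow_left₀ (by positivity) hA 2
    rw [mul_pow, hAsq] at h2
    exact h2
  -- E bounds
  have hgub : ∀ t ∈ Ici (0:ℝ), g t ≤ γ - a := by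
    intro t ht
    have h1 := hbound (u t) (hmem t ht)
    have h2 := hbound xinf hxinfU
    simp only [hgdef]
    linarith [h1.2, h2.1]
  have hglb : ∀ t ∈ Ici (0:ℝ), a - γ ≤ g t := by
    intro t ht
    have h1 := hbound (u t) (hmem t ht)
    have h2 := hbound xinf hxinfU
    simp only [hgdef]
    linarith [h1.1, h2.2]
  -- Step 1: g is nonnegative on [0, ∞)
  have hgnonneg : ∀ t ∈ Ici (0:ℝ), 0 ≤ g t := by
    by_contra hcon
    push_neg at hcon
    obtain ⟨t0, ht0, hneg⟩ := hcon
    have hanti : AntitoneOn g (Ici t0) :=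
      my_antitoneOn_Ici (fun t ht => hg' t (Set.mem_Ici.mpr (le_trans ht0 ht)))
        (fun t ht => neg_nonpos.mpr (sq_nonneg _))
    have hle : ∀ t ∈ Ici t0, g t ≤ g t0 :=
      fun t ht => hanti (self_mem_Ici) ht ht
    have hw' : ∀ t ∈ Ici t0, HasDerivAt (fun t => (-(g t)) * Real.exp (-(c^2) * (t - t0)))
        ((‖v t‖^2 - c^2 * (-(g t))) * Real.exp (-(c^2) * (t - t0))) t := by
      intro t ht
      have h1 : HasDerivAt (fun t => -(g t)) (‖v t‖^2) t := by
        have := (hg' t (Set.mem_Ici.mpr (le_trans ht0 ht))).neg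
        rw [neg_neg] at this
        exact this
      have h2 : HasDerivAt (fun t => Real.exp (-(c^2) * (t - t0)))
          (Real.exp (-(c^2) * (t - t0)) * (-(c^2))) t := by
        have hin : HasDerivAt (fun t : ℝ => -(c^2) * (t - t0)) (-(c^2)) t := by
          simpa using ((hasDerivAt_id t).sub_const t0).const_mul (-(c^2))
        exact hin.exp
      have := h1.mul h2
      exact this.congr_deriv (by ring)
    have hmono : MonotoneOn (fun t => (-(g t)) * Real.exp (-(c^2) * (t - t0))) (Ici t0) := by
      apply my_monotoneOn_Ici hw'
      intro t ht
      have h1 := hvsq t (Set.mem_Ici.mpr (le_trans ht0 ht))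
      have h2 : g t ≤ g t0 := hle t ht
      have h3 : |g t| = -(g t) := abs_of_neg (lt_of_le_of_lt h2 hneg)
      rw [h3] at h1
      have h4 : (0:ℝ) ≤ ‖v t‖^2 - c^2 * (-(g t)) := by linarith
      positivity
    have hgt0pos : 0 < -(g t0) := by linarith
    have hγa : (0:ℝ) < γ - a := by linarith
    have hRpos : 0 < (γ - a) / (-(g t0)) := div_pos hγa hgt0pos
    have hR1 : 1 ≤ (γ - a) / (-(g t0)) := by
      rw [le_div_iff₀ hgt0pos]
      have := hglb t0 ht0
      linarith
    have hlogR : 0 ≤ Real.log ((γ - a) / (-(g t0))) := Real.log_nonneg hR1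
    set t1 : ℝ := t0 + (Real.log ((γ - a) / (-(g t0))) + 1) / c^2 with ht1def
    have ht01 : t0 ≤ t1 := by
      rw [ht1def]
      have : 0 ≤ (Real.log ((γ - a) / (-(g t0))) + 1) / c^2 := by positivity
      linarith
    have hmle := hmono (self_mem_Ici) ht01 ht01
    simp only [sub_self, mul_zero, Real.exp_zero, mul_one] at hmle
    have he1 : -(c^2) * (t1 - t0) = -(Real.log ((γ - a) / (-(g t0))) + 1) := by
      rw [ht1def]
      field_simp
      ring
    rw [he1] at hmle
    have he2 : Real.exp (-(Real.log ((γ - a) / (-(g t0))) + 1)) =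
        (1 / ((γ - a) / (-(g t0)))) * Real.exp (-1) := by
      rw [neg_add, Real.exp_add, Real.exp_neg, Real.exp_log hRpos]
      ring
    rw [he2] at hmle
    have hgt1 : -(g t1) ≤ γ - a := by
      have := hglb t1 (Set.mem_Ici.mpr (le_trans ht0 ht01))
      linarith
    have h5 : -(g t1) * ((1 / ((γ - a) / (-(g t0)))) * Real.exp (-1)) ≤
        (γ - a) * ((1 / ((γ - a) / (-(g t0)))) * Real.exp (-1)) :=
      mul_le_mul_of_nonneg_right hgt1 (by positivity)
    have h6 : (γ - a) * ((1 / ((γ - a) / (-(g t0)))) * Real.exp (-1)) =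
        (-(g t0)) * Real.exp (-1) := by
      rw [one_div, inv_div]
      field_simp
    have h7 : (-(g t0)) * Real.exp (-1) < -(g t0) := by
      have hex : Real.exp (-1 : ℝ) < 1 := by
        rw [Real.exp_lt_one_iff]
        norm_num
      nlinarith
    exact absurd (((hmle.trans h5).trans_eq h6).trans_lt h7) (lt_irrefl _)
  -- Step 2: exponential decay of g
  have hdecay : ∀ s t : ℝ, 0 ≤ s → s ≤ t →
      g t * Real.exp (c^2 * t) ≤ g s * Real.exp (c^2 * s) := by
    have hw' : ∀ t ∈ Ici (0:ℝ), HasDerivAt (fun t => g t * Real.exp (c^2 * t))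
        ((c^2 * g t - ‖v t‖^2) * Real.exp (c^2 * t)) t := by
      intro t ht
      have h2 : HasDerivAt (fun t : ℝ => Real.exp (c^2 * t))
          (Real.exp (c^2 * t) * c^2) t := by
        have hin : HasDerivAt (fun t : ℝ => c^2 * t) (c^2) t := by
          simpa using (hasDerivAt_id t).const_mul (c^2)
        exact hin.exp
      have := (hg' t ht).mul h2
      exact this.congr_deriv (by ring)
    have hanti : AntitoneOn (fun t => g t * Real.exp (c^2 * t)) (Ici (0:ℝ)) := by
      apply my_antitoneOn_Ici hw'
      intro t ht
      have h1 := hvsq t ht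
      have h2 : c^2 * g t ≤ c^2 * |g t| := by
        have := le_abs_self (g t)
        nlinarith [sq_nonneg c]
      have h3 : c^2 * g t - ‖v t‖^2 ≤ 0 := by linarith
      have h4 : (0:ℝ) < Real.exp (c^2 * t) := Real.exp_pos _
      nlinarith
    intro s t hs hst
    exact hanti hs (le_trans hs hst) hst
  have hdecay' : ∀ s t : ℝ, 0 ≤ s → s ≤ t → g t ≤ g s * Real.exp (-(c^2) * (t - s)) := by
    intro s t hs hst
    have h := hdecay s t hs hst
    calc g t = (g t * Real.exp (c^2 * t)) * Real.exp (-(c^2 * t)) := by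
          rw [mul_assoc, ← Real.exp_add]
          simp
      _ ≤ (g s * Real.exp (c^2 * s)) * Real.exp (-(c^2 * t)) :=
          mul_le_mul_of_nonneg_right h (Real.exp_pos _).le
      _ = g s * Real.exp (-(c^2) * (t - s)) := by
          rw [mul_assoc, ← Real.exp_add]
          ring_nf
  have hsqdecay : ∀ s t : ℝ, 0 ≤ s → s ≤ t →
      Real.sqrt (g t) ≤ Real.sqrt (g s) * Real.exp (-(c^2) * (t - s) / 2) := by
    intro s t hs hst
    calc Real.sqrt (g t) ≤ Real.sqrt (g s * Real.exp (-(c^2) * (t - s))) :=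
        Real.sqrt_le_sqrt (hdecay' s t hs hst)
      _ = Real.sqrt (g s) * Real.sqrt (Real.exp (-(c^2) * (t - s))) :=
        Real.sqrt_mul (hgnonneg s hs) _
      _ = Real.sqrt (g s) * Real.exp (-(c^2) * (t - s) / 2) := by
        rw [← Real.exp_half]
  -- Step 3: key length estimate
  have key : ∀ s t : ℝ, 0 ≤ s → s ≤ t →
      ‖j (u t) - j (u s)‖ ≤ (2/c) * Real.sqrt (g s) := by
    intro s t hs hst
    apply le_of_forall_pos_le_add
    intro δ hδ
    have hts : 0 ≤ t - s := by linarith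
    have hinvc : 0 < 1/c := by positivity
    have hct : 0 ≤ c/2 * (t - s) := by positivity
    have hC : 0 < 1/c + c/2*(t-s) + 1 := by linarith
    have hεpos : 0 < (δ / (1/c + c/2*(t-s) + 1))^2 := by positivity
    have hsqε : Real.sqrt ((δ / (1/c + c/2*(t-s) + 1))^2) = δ / (1/c + c/2*(t-s) + 1) :=
      Real.sqrt_sq (by positivity)
    have happ := my_key_estimate c ((δ / (1/c + c/2*(t-s) + 1))^2) hc hεpos
      g (fun τ => j (u τ)) v s t hst
      (fun τ hτ => hg' τ (le_trans hs hτ))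
      (fun τ hτ => hf' τ (le_trans hs hτ))
      (fun τ hτ => hgnonneg τ (le_trans hs hτ))
      (fun τ hτ => hsqdecay s τ hs hτ)
    rw [hsqε] at happ
    have hb1 : Real.sqrt (g s + (δ / (1/c + c/2*(t-s) + 1))^2) ≤
        Real.sqrt (g s) + δ / (1/c + c/2*(t-s) + 1) := by
      have := my_sqrt_add_le (g s) ((δ / (1/c + c/2*(t-s) + 1))^2) (hgnonneg s hs) hεpos.le
      rwa [hsqε] at this
    have hb2 : 0 ≤ Real.sqrt (g t + (δ / (1/c + c/2*(t-s) + 1))^2) := Real.sqrt_nonneg _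
    have hb3 : 1 - Real.exp (-(c^2) * (t - s) / 2) ≤ 1 := by
      have := Real.exp_pos (-(c^2) * (t - s) / 2)
      linarith
    have hb4 : 0 ≤ Real.sqrt (g s) := Real.sqrt_nonneg _
    have hb5 : 0 ≤ 1 - Real.exp (-(c^2) * (t - s) / 2) := by
      have hle1 : Real.exp (-(c^2) * (t - s) / 2) ≤ 1 := by
        rw [Real.exp_le_one_iff]
        nlinarith [sq_nonneg c]
      linarith
    have hδC : 0 < δ / (1/c + c/2*(t-s) + 1) := by positivity
    have hfinal : (1/c) * (δ / (1/c + c/2*(t-s) + 1))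
        + (c/2) * (δ / (1/c + c/2*(t-s) + 1)) * (t - s) ≤ δ := by
      have h1 : (1/c) * (δ / (1/c + c/2*(t-s) + 1))
          + (c/2) * (δ / (1/c + c/2*(t-s) + 1)) * (t - s)
          = (1/c + c/2*(t-s)) * (δ / (1/c + c/2*(t-s) + 1)) := by ring
      rw [h1]
      have h2 : (1/c + c/2*(t-s)) * (δ / (1/c + c/2*(t-s) + 1)) ≤
          (1/c + c/2*(t-s) + 1) * (δ / (1/c + c/2*(t-s) + 1)) := by
        apply mul_le_mul_of_nonneg_right (by linarith) hδC.le
      have h3 : (1/c + c/2*(t-s) + 1) * (δ / (1/c + c/2*(t-s) + 1)) = δ := by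
        field_simp
      linarith
    have e2 : (1/c) * Real.sqrt (g s) * (1 - Real.exp (-(c^2) * (t - s) / 2)) ≤
        (1/c) * Real.sqrt (g s) := by
      nlinarith [mul_nonneg (mul_nonneg hinvc.le hb4)
        (Real.exp_pos (-(c^2) * (t - s) / 2)).le]
    have e1 : (1/c) * (Real.sqrt (g s + (δ / (1/c + c/2*(t-s) + 1))^2)
        - Real.sqrt (g t + (δ / (1/c + c/2*(t-s) + 1))^2)) ≤
        (1/c) * (Real.sqrt (g s) + δ / (1/c + c/2*(t-s) + 1)) := by
      apply mul_le_mul_of_nonneg_left _ hinvc.le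
      linarith
    have e3 : (1/c) * (Real.sqrt (g s) + δ / (1/c + c/2*(t-s) + 1)) =
        (1/c) * Real.sqrt (g s) + (1/c) * (δ / (1/c + c/2*(t-s) + 1)) := by ring
    have e4 : (2:ℝ)/c * Real.sqrt (g s) = (1/c) * Real.sqrt (g s) + (1/c) * Real.sqrt (g s) := by
      ring
    rw [e4]
    linarith [happ, e1, e2, hfinal]
  -- sqrt g bound
  have hsqg : ∀ s : ℝ, 0 ≤ s → Real.sqrt (g s) ≤
      Real.sqrt (γ - a) * Real.exp (-(c^2) * s / 2) := by
    intro s hs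
    have h1 := hsqdecay 0 s le_rfl hs
    have h2 : Real.sqrt (g 0) ≤ Real.sqrt (γ - a) :=
      Real.sqrt_le_sqrt (hgub 0 self_mem_Ici)
    calc Real.sqrt (g s) ≤ Real.sqrt (g 0) * Real.exp (-(c^2) * (s - 0) / 2) := h1
      _ ≤ Real.sqrt (γ - a) * Real.exp (-(c^2) * s / 2) := by
          rw [sub_zero]
          exact mul_le_mul_of_nonneg_right h2 (Real.exp_pos _).le
  -- Cauchy sequence
  have hcauchy : CauchySeq (fun n : ℕ => j (u n)) := by
    apply cauchySeq_of_le_tendsto_0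
      (fun N : ℕ => (2/c) * (Real.sqrt (γ - a) * Real.exp (-(c^2) * N / 2)))
    · intro n m N hn hm
      have hkey : ∀ p q : ℕ, p ≤ q → N ≤ p →
          dist (j (u p)) (j (u q)) ≤
            (2/c) * (Real.sqrt (γ - a) * Real.exp (-(c^2) * N / 2)) := by
        intro p q hpq hNp
        rw [dist_eq_norm, norm_sub_rev]
        have hp0 : (0:ℝ) ≤ (p:ℝ) := Nat.cast_nonneg p
        have hpq' : (p:ℝ) ≤ (q:ℝ) := Nat.cast_le.mpr hpq
        have h1 := key p q hp0 hpq'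
        have h2 := hsqg p hp0
        have h3 : Real.exp (-(c^2) * p / 2) ≤ Real.exp (-(c^2) * N / 2) := by
          apply Real.exp_le_exp.mpr
          have : (N:ℝ) ≤ (p:ℝ) := Nat.cast_le.mpr hNp
          nlinarith [sq_nonneg c]
        have hc2 : (0:ℝ) < 2/c := by positivity
        calc ‖j (u (q:ℝ)) - j (u (p:ℝ))‖ ≤ (2/c) * Real.sqrt (g p) := h1
          _ ≤ (2/c) * (Real.sqrt (γ - a) * Real.exp (-(c^2) * p / 2)) :=
              mul_le_mul_of_nonneg_left h2 hc2.le
          _ ≤ (2/c) * (Real.sqrt (γ - a) * Real.exp (-(c^2) * N / 2)) := by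
              apply mul_le_mul_of_nonneg_left _ hc2.le
              exact mul_le_mul_of_nonneg_left h3 (Real.sqrt_nonneg _)
      rcases le_total n m with h | h
      · exact hkey n m h hn
      · rw [dist_comm]
        exact hkey m n h hm
    · have h1 : Tendsto (fun N : ℕ => -(c^2) * (N:ℝ) / 2) atTop atBot := by
        apply Tendsto.atBot_div_const (by norm_num : (0:ℝ) < 2)
        exact (tendsto_natCast_atTop_atTop (R := ℝ)).const_mul_atTop_of_neg (by nlinarith)
      have h2 : Tendsto (fun N : ℕ => Real.exp (-(c^2) * (N:ℝ) / 2)) atTop (nhds 0) :=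
        Real.tendsto_exp_atBot.comp h1
      have h3 := h2.const_mul (Real.sqrt (γ - a))
      have h4 := h3.const_mul (2/c)
      simpa using h4
  obtain ⟨uinf, hlim⟩ := cauchySeq_tendsto_of_complete hcauchy
  refine ⟨uinf, fun t ht => ?_⟩
  have htend : Tendsto (fun n : ℕ => ‖j (u t) - j (u n)‖) atTop
      (nhds ‖j (u t) - uinf‖) := (tendsto_const_nhds.sub hlim).norm
  apply le_of_tendsto htend
  rw [eventually_atTop]
  refine ⟨Nat.ceil t, fun n hn => ?_⟩
  have htn : t ≤ (n:ℝ) := le_trans (Nat.le_ceil t) (Nat.cast_le.mpr hn)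
  have h1 := key t n ht htn
  have h2 := hsqg t ht
  rw [norm_sub_rev]
  have hc2 : (0:ℝ) ≤ 2/c := by positivity
  calc ‖j (u (n:ℝ)) - j (u t)‖ ≤ (2/c) * Real.sqrt (g t) := h1
    _ ≤ (2/c) * (Real.sqrt (γ - a) * Real.exp (-(c^2) * t / 2)) :=
        mul_le_mul_of_nonneg_left h2 hc2
    _ = (2/c) * Real.sqrt (γ - a) * Real.exp (-(c^2) * t / 2) := by ring
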